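/- For μ, ν ∈ P₂(ℝ^d) and k ∈ {1,…,d−1}: S_{k+1}²(μ,ν) − S_k²(μ,ν) ≥ (W₂²(μ,ν) − S_k²(μ,ν))/(d − k). -/

import Mathlib

noncomputable section
open MeasureTheory Matrix

abbrev Ed (d : ℕ) := EuclideanSpace ℝ (Fin d)

def couplings {d : ℕ} (μ ν : Measure (Ed d)) : Set (Measure (Ed d × Ed d)) :=
  {π | IsProbabilityMeasure π ∧ π.map Prod.fst = μ ∧ π.map Prod.snd = ν}

def transportCost {d : ℕ} (π : Measure (Ed d × Ed d)) : ℝ :=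
  ∫ p, ‖p.1 - p.2‖ ^ 2 ∂π

/-- Squared 2-Wasserstein distance. -/
def W2sq {d : ℕ} (μ ν : Measure (Ed d)) : ℝ :=
  sInf (transportCost '' couplings μ ν)

/-- Second-order displacement matrix `V_π = ∫ (x−y)(x−y)ᵀ dπ`, entrywise. -/
def Vpi {d : ℕ} (π : Measure (Ed d × Ed d)) : Matrix (Fin d) (Fin d) ℝ :=
  Matrix.of fun i j => ∫ p, (p.1 i - p.2 i) * (p.1 j - p.2 j) ∂π

lemma Vpi_isHermitian {d : ℕ} (π : Measure (Ed d × Ed d)) : (Vpi π).IsHermitian := by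
  unfold Matrix.IsHermitian
  ext i j
  simp [Vpi, Matrix.conjTranspose_apply, mul_comm]

/-- Eigenvalues in decreasing order: `eigDesc V h i` is the `(i+1)`-th largest eigenvalue. -/
def eigDesc {d : ℕ} (V : Matrix (Fin d) (Fin d) ℝ) (h : V.IsHermitian) : Fin d → ℝ :=
  fun i => h.eigenvalues (Tuple.sort h.eigenvalues i.rev)

/-- Sum of the `k` largest eigenvalues. -/
def topEigSum {d : ℕ} (k : ℕ) (V : Matrix (Fin d) (Fin d) ℝ) (h : V.IsHermitian) : ℝ :=
  ∑ i ∈ Finset.univ.filter (fun i : Fin d => (i : ℕ) < k), eigDesc V h i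

/-- Squared subspace robust Wasserstein distance:
`S_k²(μ,ν) = inf_{π ∈ Π(μ,ν)} Σ_{l=1}^k λ_l(V_π)`. -/
def SRWsq {d : ℕ} (k : ℕ) (μ ν : Measure (Ed d)) : ℝ :=
  sInf ((fun π => topEigSum k (Vpi π) (Vpi_isHermitian π)) '' couplings μ ν)

/-! ### Auxiliary lemmas -/

lemma coord_abs_le_norm {d : ℕ} (v : Ed d) (i : Fin d) : |v i| ≤ ‖v‖ := by
  rw [EuclideanSpace.norm_eq, ← Real.sqrt_sq_eq_abs]
  apply Real.sqrt_le_sqrt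
  have h : ‖v i‖ ^ 2 = v i ^ 2 := by rw [Real.norm_eq_abs, sq_abs]
  calc v i ^ 2 = ‖v i‖ ^ 2 := h.symm
    _ ≤ ∑ j, ‖v j‖ ^ 2 :=
      Finset.single_le_sum (f := fun j => ‖v j‖ ^ 2) (fun j _ => sq_nonneg _) (Finset.mem_univ i)

lemma norm_sq_eq_sum' {d : ℕ} (v : Ed d) : ‖v‖ ^ 2 = ∑ i, v i ^ 2 := by
  rw [EuclideanSpace.norm_eq, Real.sq_sqrt (Finset.sum_nonneg fun i _ => sq_nonneg _)]
  simp [Real.norm_eq_abs, sq_abs]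

lemma cost_integrable {d : ℕ} {μ ν : Measure (Ed d)} {π : Measure (Ed d × Ed d)}
    (hπ : π ∈ couplings μ ν)
    (hμ : Integrable (fun x => ‖x‖ ^ 2) μ) (hν : Integrable (fun x => ‖x‖ ^ 2) ν) :
    Integrable (fun p : Ed d × Ed d => ‖p.1 - p.2‖ ^ 2) π := by
  obtain ⟨hprob, hfst, hsnd⟩ := hπ
  have h1 : Integrable (fun p : Ed d × Ed d => ‖p.1‖ ^ 2) π := by
    rw [← hfst] at hμ
    exact (integrable_map_measure
      ((continuous_norm.pow 2).aestronglyMeasurable :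
        AEStronglyMeasurable (fun x : Ed d => ‖x‖ ^ 2) (π.map Prod.fst))
      measurable_fst.aemeasurable).mp hμ
  have h2 : Integrable (fun p : Ed d × Ed d => ‖p.2‖ ^ 2) π := by
    rw [← hsnd] at hν
    exact (integrable_map_measure
      ((continuous_norm.pow 2).aestronglyMeasurable :
        AEStronglyMeasurable (fun x : Ed d => ‖x‖ ^ 2) (π.map Prod.snd))
      measurable_snd.aemeasurable).mp hν
  have hb : Integrable (fun p : Ed d × Ed d => 2 * (‖p.1‖ ^ 2 + ‖p.2‖ ^ 2)) π := by
    have := (h1.add h2).const_mul 2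
    simpa using this
  refine Integrable.mono' hb
    (((continuous_fst.sub continuous_snd).norm.pow 2).aestronglyMeasurable) ?_
  filter_upwards with p
  have hle : ‖p.1 - p.2‖ ≤ ‖p.1‖ + ‖p.2‖ := norm_sub_le _ _
  have h0 : (0:ℝ) ≤ ‖p.1 - p.2‖ := norm_nonneg _
  rw [Real.norm_eq_abs, abs_of_nonneg (sq_nonneg _)]
  nlinarith [sq_nonneg (‖p.1‖ - ‖p.2‖), norm_nonneg p.1, norm_nonneg p.2]

lemma entry_integrable {d : ℕ} {μ ν : Measure (Ed d)} {π : Measure (Ed d × Ed d)}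
    (hπ : π ∈ couplings μ ν)
    (hμ : Integrable (fun x => ‖x‖ ^ 2) μ) (hν : Integrable (fun x => ‖x‖ ^ 2) ν)
    (i j : Fin d) :
    Integrable (fun p : Ed d × Ed d => (p.1 i - p.2 i) * (p.1 j - p.2 j)) π := by
  refine Integrable.mono' (cost_integrable hπ hμ hν) ?_ ?_
  · have hc : Continuous fun p : Ed d × Ed d => (p.1 i - p.2 i) * (p.1 j - p.2 j) := by
      have hi : Continuous fun p : Ed d × Ed d => p.1 i - p.2 i :=
        ((EuclideanSpace.proj i : Ed d →L[ℝ] ℝ).continuous.comp continuous_fst).sub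
          ((EuclideanSpace.proj i : Ed d →L[ℝ] ℝ).continuous.comp continuous_snd)
      have hj : Continuous fun p : Ed d × Ed d => p.1 j - p.2 j :=
        ((EuclideanSpace.proj j : Ed d →L[ℝ] ℝ).continuous.comp continuous_fst).sub
          ((EuclideanSpace.proj j : Ed d →L[ℝ] ℝ).continuous.comp continuous_snd)
      exact hi.mul hj
    exact hc.aestronglyMeasurable
  · filter_upwards with p
    have e1 : p.1 i - p.2 i = (p.1 - p.2) i := by simp
    have e2 : p.1 j - p.2 j = (p.1 - p.2) j := by simp
    rw [Real.norm_eq_abs, abs_mul, e1, e2]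
    calc |(p.1 - p.2) i| * |(p.1 - p.2) j| ≤ ‖p.1 - p.2‖ * ‖p.1 - p.2‖ :=
          mul_le_mul (coord_abs_le_norm _ _) (coord_abs_le_norm _ _) (abs_nonneg _)
            (norm_nonneg _)
      _ = ‖p.1 - p.2‖ ^ 2 := (sq _).symm

section
variable {d : ℕ} {π : Measure (Ed d × Ed d)}
  (hent : ∀ i j : Fin d,
    Integrable (fun p : Ed d × Ed d => (p.1 i - p.2 i) * (p.1 j - p.2 j)) π)

include hent

lemma trace_Vpi : (Vpi π).trace = transportCost π := by
  rw [Matrix.trace]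
  have h : ∀ i : Fin d, (Vpi π).diag i = ∫ p, (p.1 i - p.2 i) * (p.1 i - p.2 i) ∂π :=
    fun i => rfl
  rw [Finset.sum_congr rfl fun i _ => h i,
    ← integral_finset_sum _ (fun i _ => hent i i)]
  unfold transportCost
  congr 1
  ext p
  rw [norm_sq_eq_sum']
  exact Finset.sum_congr rfl fun i _ => by simp [sq]

lemma Vpi_posSemidef : (Vpi π).PosSemidef := by
  refine .of_dotProduct_mulVec_nonneg (Vpi_isHermitian π) ?_
  intro c
  have hstep : ∀ i : Fin d, c i * ∑ j, (Vpi π) i j * c j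
      = ∫ p, ∑ j, c i * c j * ((p.1 i - p.2 i) * (p.1 j - p.2 j)) ∂π := by
    intro i
    rw [integral_finset_sum _ (fun j _ => ((hent i j).const_mul _))]
    rw [Finset.mul_sum]
    refine Finset.sum_congr rfl fun j _ => ?_
    rw [show (Vpi π) i j = ∫ p, (p.1 i - p.2 i) * (p.1 j - p.2 j) ∂π from rfl,
      mul_comm _ (c j), ← mul_assoc, ← integral_const_mul]
  have key : star c ⬝ᵥ (Vpi π) *ᵥ c
      = ∫ p, (∑ i, c i * (p.1 i - p.2 i)) ^ 2 ∂π := by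
    rw [dotProduct, show (star c : Fin d → ℝ) = c from rfl]
    simp only [Matrix.mulVec, dotProduct]
    rw [Finset.sum_congr rfl fun i _ => hstep i,
      ← integral_finset_sum _ (fun i _ => integrable_finset_sum _
        (fun j _ => ((hent i j).const_mul _)))]
    refine integral_congr_ae (Filter.Eventually.of_forall fun p => ?_)
    show ∑ i, ∑ j, c i * c j * ((p.1 i - p.2 i) * (p.1 j - p.2 j))
        = (∑ i, c i * (p.1 i - p.2 i)) ^ 2
    rw [sq, Finset.sum_mul_sum]
    exact Finset.sum_congr rfl fun i _ => Finset.sum_congr rfl fun j _ => by ring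
  rw [key]
  exact integral_nonneg fun p => sq_nonneg _

end

lemma prod_mem_couplings {d : ℕ} (μ ν : Measure (Ed d))
    [IsProbabilityMeasure μ] [IsProbabilityMeasure ν] :
    μ.prod ν ∈ couplings μ ν := by
  refine ⟨by infer_instance, ?_, ?_⟩
  · rw [Measure.map_fst_prod]; simp
  · rw [Measure.map_snd_prod]; simp

lemma eigDesc_antitone {d : ℕ} (V : Matrix (Fin d) (Fin d) ℝ) (h : V.IsHermitian) :
    Antitone (eigDesc V h) := by
  intro i j hij
  exact Tuple.monotone_sort h.eigenvalues (Fin.rev_le_rev.mpr hij)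

lemma sum_eigDesc {d : ℕ} (V : Matrix (Fin d) (Fin d) ℝ) (h : V.IsHermitian) :
    ∑ i, eigDesc V h i = V.trace := by
  rw [show V.trace = ∑ i, h.eigenvalues i by
    conv_lhs => rw [h.spectral_theorem]
    rw [Unitary.conjStarAlgAut_apply, Matrix.trace_mul_comm, ← mul_assoc, (IsHermitian.eigenvectorUnitary h).prop.1,
      one_mul, Matrix.trace_diagonal]
    simp]
  exact Equiv.sum_comp ((Fin.revPerm).trans (Tuple.sort h.eigenvalues)) h.eigenvalues

lemma card_filter_not_lt {d k : ℕ} (hk : k ≤ d) :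
    (Finset.univ.filter fun i : Fin d => ¬ (i : ℕ) < k).card = d - k := by
  have h1 : ((Finset.univ.filter fun i : Fin d => (i : ℕ) < k).map Fin.valEmbedding)
      = Finset.range k := by
    ext j
    simp only [Finset.mem_map, Finset.mem_filter, Finset.mem_univ, true_and,
      Fin.valEmbedding_apply, Finset.mem_range]
    constructor
    · rintro ⟨i, hi, rfl⟩; exact hi
    · intro hj; exact ⟨⟨j, lt_of_lt_of_le hj hk⟩, hj, rfl⟩
  have h2 : (Finset.univ.filter fun i : Fin d => (i : ℕ) < k).card = k := by
    rw [← Finset.card_map Fin.valEmbedding, h1, Finset.card_range]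
  rw [Finset.filter_not, Finset.card_sdiff_of_subset (Finset.filter_subset _ _), h2]
  simp

lemma key_spec {d k : ℕ} (hk1 : k + 1 ≤ d) (V : Matrix (Fin d) (Fin d) ℝ)
    (h : V.IsHermitian) :
    topEigSum k V h + (V.trace - topEigSum k V h) / ((d : ℝ) - k)
      ≤ topEigSum (k + 1) V h := by
  have hkd : k < d := hk1
  have hsplit : topEigSum (k + 1) V h = topEigSum k V h + eigDesc V h ⟨k, hkd⟩ := by
    unfold topEigSum
    have h3 : Finset.univ.filter (fun i : Fin d => (i : ℕ) < k + 1)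
        = insert (⟨k, hkd⟩ : Fin d) (Finset.univ.filter fun i : Fin d => (i : ℕ) < k) := by
      ext i
      simp only [Finset.mem_filter, Finset.mem_univ, true_and, Finset.mem_insert, Fin.ext_iff]
      omega
    rw [h3, Finset.sum_insert (by simp)]
    ring
  rw [hsplit]
  have hc : (0:ℝ) < (d : ℝ) - k := by
    have : (k:ℝ) < d := by exact_mod_cast hkd
    linarith
  rw [add_le_add_iff_left, div_le_iff₀ hc]
  have htr : V.trace - topEigSum k V h
      = ∑ i ∈ Finset.univ.filter (fun i : Fin d => ¬ (i : ℕ) < k), eigDesc V h i := by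
    rw [← sum_eigDesc V h, topEigSum,
      ← Finset.sum_filter_add_sum_filter_not Finset.univ (fun i : Fin d => (i : ℕ) < k)]
    ring
  rw [htr]
  have hbound : ∑ i ∈ Finset.univ.filter (fun i : Fin d => ¬ (i : ℕ) < k), eigDesc V h i
      ≤ ∑ _i ∈ Finset.univ.filter (fun i : Fin d => ¬ (i : ℕ) < k), eigDesc V h ⟨k, hkd⟩ := by
    apply Finset.sum_le_sum
    intro i hi
    simp only [Finset.mem_filter, Finset.mem_univ, true_and, not_lt] at hi
    exact eigDesc_antitone V h (by exact_mod_cast hi : (⟨k, hkd⟩ : Fin d) ≤ i)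
  refine hbound.trans ?_
  rw [Finset.sum_const, card_filter_not_lt hkd.le, nsmul_eq_mul]
  rw [show ((d - k : ℕ) : ℝ) = (d : ℝ) - k from by rw [Nat.cast_sub hkd.le], mul_comm]

/-- `S_{k+1}²(μ,ν) − S_k²(μ,ν) ≥ (W₂²(μ,ν) − S_k²(μ,ν))/(d − k)`. -/
theorem SRWsq_increment_lower_bound {d : ℕ} (k : ℕ) (hk : 1 ≤ k) (hkd : k ≤ d - 1)
    (μ ν : Measure (Ed d)) [IsProbabilityMeasure μ] [IsProbabilityMeasure ν]
    (hμ : Integrable (fun x => ‖x‖ ^ 2) μ) (hν : Integrable (fun x => ‖x‖ ^ 2) ν) :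
    (W2sq μ ν - SRWsq k μ ν) / ((d : ℝ) - k) ≤ SRWsq (k+1) μ ν - SRWsq k μ ν := by
  have hd1 : 1 ≤ d := by omega
  have hk1 : k + 1 ≤ d := by omega
  have hc0 : (0:ℝ) < (d : ℝ) - k := by
    have : (k:ℝ) < d := by exact_mod_cast (by omega : k < d)
    linarith
  have hc1 : (1:ℝ) ≤ (d : ℝ) - k := by
    have : ((k:ℝ) + 1) ≤ d := by exact_mod_cast hk1
    linarith
  -- nonneg lower bounds
  have hW_bdd : ∀ x ∈ transportCost '' couplings μ ν, (0:ℝ) ≤ x := by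
    rintro x ⟨π, hπ, rfl⟩
    exact integral_nonneg fun p => sq_nonneg _
  have hS_bdd : ∀ m : ℕ, ∀ x ∈ (fun π => topEigSum m (Vpi π) (Vpi_isHermitian π)) ''
      couplings μ ν, (0:ℝ) ≤ x := by
    rintro m x ⟨π, hπ, rfl⟩
    have hpsd := Vpi_posSemidef (entry_integrable hπ hμ hν)
    refine Finset.sum_nonneg fun i _ => ?_
    exact hpsd.eigenvalues_nonneg _
  -- nonemptiness
  have hne : (couplings μ ν).Nonempty := ⟨μ.prod ν, prod_mem_couplings μ ν⟩
  have hmain : SRWsq k μ ν + (W2sq μ ν - SRWsq k μ ν) / ((d : ℝ) - k) ≤ SRWsq (k+1) μ ν := by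
    apply le_csInf (hne.image _)
    rintro b ⟨π, hπ, rfl⟩
    have hent := entry_integrable hπ hμ hν
    have hA : SRWsq k μ ν ≤ topEigSum k (Vpi π) (Vpi_isHermitian π) :=
      csInf_le ⟨0, fun x hx => hS_bdd k x hx⟩ ⟨π, hπ, rfl⟩
    have hB : W2sq μ ν ≤ transportCost π :=
      csInf_le ⟨0, hW_bdd⟩ ⟨π, hπ, rfl⟩
    have hkey := key_spec hk1 (Vpi π) (Vpi_isHermitian π)
    rw [trace_Vpi hent] at hkey
    refine le_trans ?_ hkey
    set c := (d : ℝ) - k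
    have e : ∀ a b : ℝ, a + (b - a) / c = (a * (c - 1) + b) / c := by
      intro a b; field_simp; ring
    rw [e, e, div_le_div_iff_of_pos_right hc0]
    have := mul_le_mul_of_nonneg_right hA (by linarith : (0:ℝ) ≤ c - 1)
    linarith
  linarith [hmain]
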